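/- If W is a unitary on H⊗H satisfying the pentagonal relation W₂₃W₁₂ = W₁₂W₁₃W₂₃ (leg numbering on H⊗H⊗H), then the map Γ(x) = W*(1⊗x)W defines a coassociative comultiplication on B(H): (Γ⊗id)∘Γ = (id⊗Γ)∘Γ. -/

import Mathlib

open TensorProduct

set_option maxHeartbeats 1000000
set_option synthInstance.maxHeartbeats 1000000

noncomputable section

namespace Stmt1

/-- Abstract monoid computation: the pentagon relation plus invertibility and
commutation of `a` with `e` gives the coassociativity identity. -/
lemma juggle {M : Type*} [Monoid M] (a a' b b' c c' e : M)
    (haa' : a * a' = 1) (ha'a : a' * a = 1) (hbb' : b * b' = 1)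
    (hcc' : c * c' = 1) (hc'c : c' * c = 1)
    (hpent : c * a = a * (b * c)) (hae : a * e = e * a) :
    a' * (c' * (e * c) * a) = c' * (b' * (e * b) * c) := by
  have h1 : c * (a * (a' * (c' * (e * c) * a))) = e * (c * a) := by
    calc c * (a * (a' * (c' * (e * c) * a)))
        = c * (c' * (e * c) * a) := by rw [← mul_assoc a a', haa', one_mul]
      _ = c * (c' * (e * (c * a))) := by rw [mul_assoc c' (e * c) a, mul_assoc e c a]
      _ = c * c' * (e * (c * a)) := by rw [← mul_assoc c c']
      _ = e * (c * a) := by rw [hcc', one_mul]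
  have h2 : c * (a * (c' * (b' * (e * b) * c))) = e * (c * a) := by
    calc c * (a * (c' * (b' * (e * b) * c)))
        = c * a * (c' * (b' * (e * b) * c)) := by rw [← mul_assoc c a]
      _ = a * (b * c) * (c' * (b' * (e * b) * c)) := by rw [hpent]
      _ = a * (b * (c * (c' * (b' * (e * b) * c)))) := by
          rw [mul_assoc a (b * c), mul_assoc b c]
      _ = a * (b * (c * c' * (b' * (e * b) * c))) := by rw [← mul_assoc c c']
      _ = a * (b * (b' * (e * b) * c)) := by rw [hcc', one_mul]
      _ = a * (b * (b' * (e * (b * c)))) := by rw [mul_assoc b' (e * b) c, mul_assoc e b c]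
      _ = a * (b * b' * (e * (b * c))) := by rw [← mul_assoc b b']
      _ = a * (e * (b * c)) := by rw [hbb', one_mul]
      _ = a * e * (b * c) := by rw [← mul_assoc a e]
      _ = e * (a * (b * c)) := by rw [hae, mul_assoc e a]
      _ = e * (c * a) := by rw [← hpent]
  have cancel : ∀ t : M, a' * (c' * (c * (a * t))) = t := fun t => by
    rw [← mul_assoc c' c, hc'c, one_mul, ← mul_assoc a' a, ha'a, one_mul]
  calc a' * (c' * (e * c) * a)
      = a' * (c' * (c * (a * (a' * (c' * (e * c) * a))))) := (cancel _).symm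
    _ = a' * (c' * (e * (c * a))) := by rw [h1]
    _ = a' * (c' * (c * (a * (c' * (b' * (e * b) * c))))) := by rw [h2]
    _ = c' * (b' * (e * b) * c) := cancel _

variable {H : Type*} [NormedAddCommGroup H] [InnerProductSpace ℂ H] [CompleteSpace H]

instance instSemiringLegs : Semiring (((H →L[ℂ] H) ⊗[ℂ] (H →L[ℂ] H)) ⊗[ℂ] (H →L[ℂ] H)) :=
  @Algebra.TensorProduct.instSemiring ℂ ((H →L[ℂ] H) ⊗[ℂ] (H →L[ℂ] H)) (H →L[ℂ] H) _
    inferInstance inferInstance inferInstance inferInstance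

instance instAlgebraLegs : Algebra ℂ (((H →L[ℂ] H) ⊗[ℂ] (H →L[ℂ] H)) ⊗[ℂ] (H →L[ℂ] H)) :=
  @Algebra.TensorProduct.instAlgebra ℂ ((H →L[ℂ] H) ⊗[ℂ] (H →L[ℂ] H)) (H →L[ℂ] H) _
    inferInstance inferInstance inferInstance inferInstance

/-- leg `(1,2)` embedding of `B(H) ⊗ B(H)` into the three-fold tensor product. -/
def leg12 : ((H →L[ℂ] H) ⊗[ℂ] (H →L[ℂ] H)) →ₐ[ℂ]
    ((H →L[ℂ] H) ⊗[ℂ] (H →L[ℂ] H)) ⊗[ℂ] (H →L[ℂ] H) :=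
  Algebra.TensorProduct.includeLeft (R := ℂ) (S := ℂ) (A := (H →L[ℂ] H) ⊗[ℂ] (H →L[ℂ] H))
    (B := H →L[ℂ] H)

/-- leg `(1,3)` embedding. -/
def leg13 : ((H →L[ℂ] H) ⊗[ℂ] (H →L[ℂ] H)) →ₐ[ℂ]
    ((H →L[ℂ] H) ⊗[ℂ] (H →L[ℂ] H)) ⊗[ℂ] (H →L[ℂ] H) :=
  Algebra.TensorProduct.map Algebra.TensorProduct.includeLeft (AlgHom.id ℂ (H →L[ℂ] H))

/-- leg `(2,3)` embedding. -/
def leg23 : ((H →L[ℂ] H) ⊗[ℂ] (H →L[ℂ] H)) →ₐ[ℂ]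
    ((H →L[ℂ] H) ⊗[ℂ] (H →L[ℂ] H)) ⊗[ℂ] (H →L[ℂ] H) :=
  Algebra.TensorProduct.map Algebra.TensorProduct.includeRight (AlgHom.id ℂ (H →L[ℂ] H))

/-- The comultiplication `Γ(x) = W* (1 ⊗ x) W`, as a linear map
`B(H) → B(H) ⊗ B(H)` (for a unitary `W`, `W⁻¹ = W*`). -/
def comult (W : ((H →L[ℂ] H) ⊗[ℂ] (H →L[ℂ] H))ˣ) :
    (H →L[ℂ] H) →ₗ[ℂ] (H →L[ℂ] H) ⊗[ℂ] (H →L[ℂ] H) :=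
  (LinearMap.mulLeft ℂ ((W⁻¹ : ((H →L[ℂ] H) ⊗[ℂ] (H →L[ℂ] H))ˣ) : _)) ∘ₗ
    (LinearMap.mulRight ℂ ((W : ((H →L[ℂ] H) ⊗[ℂ] (H →L[ℂ] H))ˣ) : _)) ∘ₗ
    (Algebra.TensorProduct.includeRight :
      (H →L[ℂ] H) →ₐ[ℂ] (H →L[ℂ] H) ⊗[ℂ] (H →L[ℂ] H)).toLinearMap

lemma comult_apply (W : ((H →L[ℂ] H) ⊗[ℂ] (H →L[ℂ] H))ˣ) (x : H →L[ℂ] H) :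
    comult W x = (↑W⁻¹ : (H →L[ℂ] H) ⊗[ℂ] (H →L[ℂ] H)) * (((1 : H →L[ℂ] H) ⊗ₜ[ℂ] x) * ↑W) :=
  rfl

lemma assoc_symm_apply (z : (H →L[ℂ] H) ⊗[ℂ] ((H →L[ℂ] H) ⊗[ℂ] (H →L[ℂ] H))) :
    (TensorProduct.assoc ℂ (H →L[ℂ] H) (H →L[ℂ] H) (H →L[ℂ] H)).symm.toLinearMap z
      = (Algebra.TensorProduct.assoc ℂ ℂ ℂ (H →L[ℂ] H) (H →L[ℂ] H) (H →L[ℂ] H)).symm z :=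
  rfl

lemma assocSymm_one_tmul (z : (H →L[ℂ] H) ⊗[ℂ] (H →L[ℂ] H)) :
    (Algebra.TensorProduct.assoc ℂ ℂ ℂ (H →L[ℂ] H) (H →L[ℂ] H) (H →L[ℂ] H)).symm
      ((1 : H →L[ℂ] H) ⊗ₜ[ℂ] z) = leg23 z := by
  induction z using TensorProduct.induction_on with
  | zero => rw [tmul_zero, map_zero, map_zero]
  | tmul p q =>
      rw [Algebra.TensorProduct.assoc_symm_tmul]
      rw [leg23, Algebra.TensorProduct.map_tmul, AlgHom.coe_id, id_eq,
        Algebra.TensorProduct.includeRight_apply]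
  | add u v hu hv => rw [tmul_add, map_add, map_add, hu, hv]

/-- `(Γ ⊗ id) T = W₁₂⁻¹ · T₂₃ · W₁₂`. -/
lemma mapL (W : ((H →L[ℂ] H) ⊗[ℂ] (H →L[ℂ] H))ˣ) :
    (TensorProduct.map (comult W) LinearMap.id :
        ((H →L[ℂ] H) ⊗[ℂ] (H →L[ℂ] H)) →ₗ[ℂ] _)
      = LinearMap.mulLeft ℂ (leg12 ((W⁻¹ : ((H →L[ℂ] H) ⊗[ℂ] (H →L[ℂ] H))ˣ) : (H →L[ℂ] H) ⊗[ℂ] (H →L[ℂ] H))) ∘ₗ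
          LinearMap.mulRight ℂ (leg12 ((W : ((H →L[ℂ] H) ⊗[ℂ] (H →L[ℂ] H))ˣ) : (H →L[ℂ] H) ⊗[ℂ] (H →L[ℂ] H))) ∘ₗ
          (leg23 : _ →ₐ[ℂ] _).toLinearMap := by
  apply TensorProduct.ext'
  intro a b
  simp only [TensorProduct.map_tmul, LinearMap.id_apply, LinearMap.comp_apply,
    AlgHom.toLinearMap_apply, LinearMap.mulLeft_apply, LinearMap.mulRight_apply]
  rw [comult_apply]
  rw [show leg23 (a ⊗ₜ[ℂ] b) = ((1 : H →L[ℂ] H) ⊗ₜ[ℂ] a) ⊗ₜ[ℂ] b from by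
    rw [leg23, Algebra.TensorProduct.map_tmul, AlgHom.coe_id, id_eq,
      Algebra.TensorProduct.includeRight_apply]]
  rw [show (leg12 ((W : ((H →L[ℂ] H) ⊗[ℂ] (H →L[ℂ] H))ˣ) : (H →L[ℂ] H) ⊗[ℂ] (H →L[ℂ] H)) :
      ((H →L[ℂ] H) ⊗[ℂ] (H →L[ℂ] H)) ⊗[ℂ] (H →L[ℂ] H))
      = ((W : ((H →L[ℂ] H) ⊗[ℂ] (H →L[ℂ] H))ˣ) : (H →L[ℂ] H) ⊗[ℂ] (H →L[ℂ] H)) ⊗ₜ[ℂ] (1 : H →L[ℂ] H) from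
    Algebra.TensorProduct.includeLeft_apply _]
  rw [show (leg12 ((W⁻¹ : ((H →L[ℂ] H) ⊗[ℂ] (H →L[ℂ] H))ˣ) : (H →L[ℂ] H) ⊗[ℂ] (H →L[ℂ] H)) :
      ((H →L[ℂ] H) ⊗[ℂ] (H →L[ℂ] H)) ⊗[ℂ] (H →L[ℂ] H))
      = ((W⁻¹ : ((H →L[ℂ] H) ⊗[ℂ] (H →L[ℂ] H))ˣ) : (H →L[ℂ] H) ⊗[ℂ] (H →L[ℂ] H)) ⊗ₜ[ℂ] (1 : H →L[ℂ] H) from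
    Algebra.TensorProduct.includeLeft_apply _]
  rw [Algebra.TensorProduct.tmul_mul_tmul, Algebra.TensorProduct.tmul_mul_tmul,
    mul_one, one_mul]

/-- `assoc⁻¹ ∘ (id ⊗ Γ) T = W₂₃⁻¹ · T₁₃ · W₂₃`. -/
lemma mapR (W : ((H →L[ℂ] H) ⊗[ℂ] (H →L[ℂ] H))ˣ) :
    ((TensorProduct.assoc ℂ (H →L[ℂ] H) (H →L[ℂ] H) (H →L[ℂ] H)).symm.toLinearMap ∘ₗ
        TensorProduct.map LinearMap.id (comult W) :
        ((H →L[ℂ] H) ⊗[ℂ] (H →L[ℂ] H)) →ₗ[ℂ] _)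
      = LinearMap.mulLeft ℂ (leg23 ((W⁻¹ : ((H →L[ℂ] H) ⊗[ℂ] (H →L[ℂ] H))ˣ) : (H →L[ℂ] H) ⊗[ℂ] (H →L[ℂ] H))) ∘ₗ
          LinearMap.mulRight ℂ (leg23 ((W : ((H →L[ℂ] H) ⊗[ℂ] (H →L[ℂ] H))ˣ) : (H →L[ℂ] H) ⊗[ℂ] (H →L[ℂ] H))) ∘ₗ
          (leg13 : _ →ₐ[ℂ] _).toLinearMap := by
  apply TensorProduct.ext'
  intro a b
  simp only [TensorProduct.map_tmul, LinearMap.id_apply, LinearMap.comp_apply,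
    AlgHom.toLinearMap_apply, LinearMap.mulLeft_apply, LinearMap.mulRight_apply]
  rw [assoc_symm_apply, comult_apply]
  rw [show a ⊗ₜ[ℂ] ((↑W⁻¹ : (H →L[ℂ] H) ⊗[ℂ] (H →L[ℂ] H)) * (((1 : H →L[ℂ] H) ⊗ₜ[ℂ] b) * (↑W : (H →L[ℂ] H) ⊗[ℂ] (H →L[ℂ] H))))
      = (((1 : H →L[ℂ] H) ⊗ₜ[ℂ] (↑W⁻¹ : (H →L[ℂ] H) ⊗[ℂ] (H →L[ℂ] H)))
          * ((a ⊗ₜ[ℂ] ((1 : H →L[ℂ] H) ⊗ₜ[ℂ] b))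
          * ((1 : H →L[ℂ] H) ⊗ₜ[ℂ] (↑W : (H →L[ℂ] H) ⊗[ℂ] (H →L[ℂ] H))))) from by
    rw [Algebra.TensorProduct.tmul_mul_tmul, Algebra.TensorProduct.tmul_mul_tmul,
      one_mul, mul_one]]
  rw [map_mul, map_mul, assocSymm_one_tmul, assocSymm_one_tmul,
    Algebra.TensorProduct.assoc_symm_tmul]
  rw [show (leg13 (a ⊗ₜ[ℂ] b) : ((H →L[ℂ] H) ⊗[ℂ] (H →L[ℂ] H)) ⊗[ℂ] (H →L[ℂ] H))
      = (a ⊗ₜ[ℂ] (1 : H →L[ℂ] H)) ⊗ₜ[ℂ] b from by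
    rw [leg13, Algebra.TensorProduct.map_tmul, AlgHom.coe_id, id_eq,
      Algebra.TensorProduct.includeLeft_apply]]

lemma leg12_comm (u : (H →L[ℂ] H) ⊗[ℂ] (H →L[ℂ] H)) (x : H →L[ℂ] H) :
    leg12 u * (((1 : H →L[ℂ] H) ⊗ₜ[ℂ] (1 : H →L[ℂ] H)) ⊗ₜ[ℂ] x)
      = (((1 : H →L[ℂ] H) ⊗ₜ[ℂ] (1 : H →L[ℂ] H)) ⊗ₜ[ℂ] x) * leg12 u := by
  rw [show (leg12 u : ((H →L[ℂ] H) ⊗[ℂ] (H →L[ℂ] H)) ⊗[ℂ] (H →L[ℂ] H))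
      = u ⊗ₜ[ℂ] (1 : H →L[ℂ] H) from Algebra.TensorProduct.includeLeft_apply _]
  rw [Algebra.TensorProduct.tmul_mul_tmul, Algebra.TensorProduct.tmul_mul_tmul,
    ← Algebra.TensorProduct.one_def, mul_one, one_mul, mul_one, one_mul]

theorem pentagon_implies_coassociative
    (W : ((H →L[ℂ] H) ⊗[ℂ] (H →L[ℂ] H))ˣ)
    (hpentagon :
      leg23 ((W : ((H →L[ℂ] H) ⊗[ℂ] (H →L[ℂ] H)))) * leg12 ((W : ((H →L[ℂ] H) ⊗[ℂ] (H →L[ℂ] H))))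
        = leg12 ((W : ((H →L[ℂ] H) ⊗[ℂ] (H →L[ℂ] H)))) * leg13 ((W : ((H →L[ℂ] H) ⊗[ℂ] (H →L[ℂ] H))))
            * leg23 ((W : ((H →L[ℂ] H) ⊗[ℂ] (H →L[ℂ] H))))) :
    (TensorProduct.map (comult W) LinearMap.id) ∘ₗ comult W
      = (TensorProduct.assoc ℂ (H →L[ℂ] H) (H →L[ℂ] H) (H →L[ℂ] H)).symm.toLinearMap ∘ₗ
          (TensorProduct.map LinearMap.id (comult W)) ∘ₗ comult W := by
  apply LinearMap.ext
  intro x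
  have hL := LinearMap.congr_fun (mapL (H := H) W) (comult W x)
  have hR := LinearMap.congr_fun (mapR (H := H) W) (comult W x)
  simp only [LinearMap.comp_apply] at hL hR ⊢
  rw [hL, hR]
  simp only [LinearMap.mulLeft_apply, LinearMap.mulRight_apply, AlgHom.toLinearMap_apply]
  have hww' : (↑W : (H →L[ℂ] H) ⊗[ℂ] (H →L[ℂ] H)) * ↑W⁻¹ = 1 := Units.mul_inv W
  have hw'w : (↑W⁻¹ : (H →L[ℂ] H) ⊗[ℂ] (H →L[ℂ] H)) * ↑W = 1 := Units.inv_mul W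
  have e23 : leg23 ((1 : H →L[ℂ] H) ⊗ₜ[ℂ] x)
      = ((1 : H →L[ℂ] H) ⊗ₜ[ℂ] (1 : H →L[ℂ] H)) ⊗ₜ[ℂ] x := by
    simp [leg23]
  have e13 : leg13 ((1 : H →L[ℂ] H) ⊗ₜ[ℂ] x)
      = ((1 : H →L[ℂ] H) ⊗ₜ[ℂ] (1 : H →L[ℂ] H)) ⊗ₜ[ℂ] x := by
    simp [leg13, Algebra.TensorProduct.one_def]
  have h23 : leg23 (comult W x)
      = leg23 (↑W⁻¹ : (H →L[ℂ] H) ⊗[ℂ] (H →L[ℂ] H))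
          * ((((1 : H →L[ℂ] H) ⊗ₜ[ℂ] (1 : H →L[ℂ] H)) ⊗ₜ[ℂ] x)
          * leg23 (↑W : (H →L[ℂ] H) ⊗[ℂ] (H →L[ℂ] H))) := by
    rw [comult_apply, map_mul (leg23 (H := H)), map_mul (leg23 (H := H)), e23]
  have h13 : leg13 (comult W x)
      = leg13 (↑W⁻¹ : (H →L[ℂ] H) ⊗[ℂ] (H →L[ℂ] H))
          * ((((1 : H →L[ℂ] H) ⊗ₜ[ℂ] (1 : H →L[ℂ] H)) ⊗ₜ[ℂ] x)
          * leg13 (↑W : (H →L[ℂ] H) ⊗[ℂ] (H →L[ℂ] H))) := by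
    rw [comult_apply, map_mul (leg13 (H := H)), map_mul (leg13 (H := H)), e13]
  rw [h23, h13]
  have haa' : leg12 (↑W : (H →L[ℂ] H) ⊗[ℂ] (H →L[ℂ] H)) * leg12 (↑W⁻¹ : _) = 1 := by
    rw [← map_mul (leg12 (H := H)), hww']; exact (leg12 (H := H)).map_one'
  have ha'a : leg12 (↑W⁻¹ : (H →L[ℂ] H) ⊗[ℂ] (H →L[ℂ] H)) * leg12 (↑W : _) = 1 := by
    rw [← map_mul (leg12 (H := H)), hw'w]; exact (leg12 (H := H)).map_one'
  have hbb' : leg13 (↑W : (H →L[ℂ] H) ⊗[ℂ] (H →L[ℂ] H)) * leg13 (↑W⁻¹ : _) = 1 := by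
    rw [← map_mul (leg13 (H := H)), hww']; exact (leg13 (H := H)).map_one'
  have hcc' : leg23 (↑W : (H →L[ℂ] H) ⊗[ℂ] (H →L[ℂ] H)) * leg23 (↑W⁻¹ : _) = 1 := by
    rw [← map_mul (leg23 (H := H)), hww']; exact (leg23 (H := H)).map_one'
  have hc'c : leg23 (↑W⁻¹ : (H →L[ℂ] H) ⊗[ℂ] (H →L[ℂ] H)) * leg23 (↑W : _) = 1 := by
    rw [← map_mul (leg23 (H := H)), hw'w]; exact (leg23 (H := H)).map_one'
  have hpent : leg23 (↑W : (H →L[ℂ] H) ⊗[ℂ] (H →L[ℂ] H)) * leg12 (↑W : _)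
      = leg12 (↑W : (H →L[ℂ] H) ⊗[ℂ] (H →L[ℂ] H))
        * (leg13 (↑W : (H →L[ℂ] H) ⊗[ℂ] (H →L[ℂ] H)) * leg23 (↑W : _)) := by
    rw [hpentagon]
    exact mul_assoc (G := ((H →L[ℂ] H) ⊗[ℂ] (H →L[ℂ] H)) ⊗[ℂ] (H →L[ℂ] H)) _ _ _
  exact juggle (M := ((H →L[ℂ] H) ⊗[ℂ] (H →L[ℂ] H)) ⊗[ℂ] (H →L[ℂ] H)) _ _ _ _ _ _ _
    haa' ha'a hbb' hcc' hc'c hpent (leg12_comm _ x)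

end Stmt1
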